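/- Suppose all parameters of the brisc system are positive and N_i ≥ 4γ/α_i. Let s* = N_s/2 + sqrt(N_s²/4 + γ N_s/α_s). If α_c ≤ s*, then every steady state of the brisc system lying in the nonnegative orthant of ℝ⁴ has c* = 0, i.e., there is no steady state with strictly positive cancer density. -/

import Mathlib

set_option maxHeartbeats 1000000


/-- A steady state of the brisc system. -/
def briscSteady (γ β αi αs αc Ni Ns Nc r i s c : ℝ) : Prop :=
  γ - β * r * i = 0 ∧
  αi * i * (1 - i / Ni) - β * r * i = 0 ∧
  β * r * i + αs * s * (1 - s / Ns) = 0 ∧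
  αc * c * (1 - c / Nc) - s * c = 0

/-- If `Ni ≥ 4γ/αi` and `αc ≤ s* = Ns/2 + √(Ns²/4 + γNs/αs)`, then every steady
state of the brisc system in the nonnegative orthant has zero cancer density. -/
theorem brisc_no_positive_cancer_steady_state
    (γ β αi αs αc Ni Ns Nc : ℝ)
    (hγ : 0 < γ) (hβ : 0 < β) (hαi : 0 < αi) (hαs : 0 < αs) (hαc : 0 < αc)
    (hNi : 0 < Ni) (hNs : 0 < Ns) (hNc : 0 < Nc)
    (hfold : Ni ≥ 4 * γ / αi)
    (hαcle : αc ≤ Ns / 2 + Real.sqrt (Ns ^ 2 / 4 + γ * Ns / αs)) :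
    ∀ r i s c : ℝ, 0 ≤ r → 0 ≤ i → 0 ≤ s → 0 ≤ c →
      briscSteady γ β αi αs αc Ni Ns Nc r i s c → c = 0 := by
  intro r i s c hr hi hs hc ⟨h1, h2, h3, h4⟩
  have hNs' : Ns ≠ 0 := hNs.ne'
  have hβri : β * r * i = γ := by linarith
  -- the s-equation with βri replaced by γ
  have h3' : αs * s ^ 2 - αs * s * Ns = γ * Ns := by
    have h3'' : γ + αs * s * (1 - s / Ns) = 0 := by rw [← hβri]; linarith
    field_simp at h3''
    nlinarith [h3'']
  set D := Ns ^ 2 / 4 + γ * Ns / αs with hD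
  have hDpos : 0 < D := by positivity
  have hsq : (s - Ns / 2) ^ 2 = D := by
    have hαs' : αs ≠ 0 := hαs.ne'
    rw [hD]; field_simp
    nlinarith [h3']
  have hge : Ns / 2 ≤ s := by
    by_contra h
    push_neg at h
    have hpos : 0 < γ * Ns / αs := by positivity
    nlinarith [hsq]
  have hsval : s = Ns / 2 + Real.sqrt D := by
    have : Real.sqrt D = s - Ns / 2 := by
      rw [← hsq, Real.sqrt_sq (by linarith)]
    linarith
  have hαcs : αc ≤ s := by rw [hsval]; exact hαcle
  by_contra hc0
  have hcpos : 0 < c := lt_of_le_of_ne hc (Ne.symm hc0)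
  -- from h4, dividing by c: αc*(1 - c/Nc) = s
  have h4' : αc * Nc - αc * c - s * Nc = 0 := by
    have hNc' : Nc ≠ 0 := hNc.ne'
    have h4'' : c * (αc * Nc - αc * c - s * Nc) = 0 := by
      field_simp at h4
      nlinarith [h4]
    rcases mul_eq_zero.mp h4'' with h | h
    · exact absurd h hcpos.ne'
    · exact h
  nlinarith [mul_pos hαc hcpos, mul_le_mul_of_nonneg_right hαcs hNc.le]
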